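/- If M is a Noetherian R-semimodule (every ascending chain of subsemimodules stabilizes) and the space D of all subsemimodules of M (excluding M itself) with its closed-subbasis topology is discrete, then M is Artinian (every descending chain of subsemimodules stabilizes). -/

import Mathlib

open Submodule

variable {R M : Type*} [CommSemiring R] [AddCommMonoid M] [Module R M]

/-- `V D N` = the set of members of `D` containing the subsemimodule `N`. -/
def V (D : Set (Submodule R M)) (N : Submodule R M) : Set (Submodule R M) :=
  {L ∈ D | N ≤ L}

/-- The topology on `D` generated by the sets `V D N` as a closed subbasis. -/
def subTop (D : Set (Submodule R M)) : TopologicalSpace ↥D :=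
  TopologicalSpace.generateFrom
    {U : Set ↥D | ∃ N : Submodule R M, U = {L : ↥D | ¬ N ≤ (L : Submodule R M)}}

theorem stmt19
    (hNoeth : ∀ f : ℕ → Submodule R M, Monotone f → ∃ n, ∀ m, n ≤ m → f m = f n)
    (hdisc : @DiscreteTopology ↥{N : Submodule R M | N ≠ ⊤}
        (subTop {N : Submodule R M | N ≠ ⊤})) :
    ∀ f : ℕ → Submodule R M, Antitone f → ∃ n, ∀ m, n ≤ m → f m = f n := by
  classical
  intro f hf
  by_cases htop : ∀ m, f m = ⊤
  · exact ⟨0, fun m _ => (htop m).trans (htop 0).symm⟩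
  push_neg at htop
  obtain ⟨n₀, hn₀⟩ := htop
  set D : Set (Submodule R M) := {N : Submodule R M | N ≠ ⊤} with hD
  set S : Set (Set ↥D) :=
    {U : Set ↥D | ∃ N : Submodule R M, U = {L : ↥D | ¬ N ≤ (L : Submodule R M)}} with hS
  set L : Submodule R M := ⨅ m, f m with hLdef
  have hLle : ∀ m, L ≤ f m := fun m => iInf_le f m
  have hL : L ≠ ⊤ := by
    intro h
    exact hn₀ (top_le_iff.mp (h ▸ hLle n₀))
  let x : ↥D := ⟨L, hL⟩
  have hopen : @IsOpen _ (subTop D) {x} :=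
    @isOpen_discrete _ (subTop D) hdisc {x}
  have hbasis := @TopologicalSpace.isTopologicalBasis_of_subbasis ↥D (subTop D) S rfl
  obtain ⟨v, hv, hxv, hvx⟩ :=
    @TopologicalSpace.IsTopologicalBasis.exists_subset_of_mem_open _ (subTop D) _ hbasis x {x}
      (Set.mem_singleton x) hopen
  obtain ⟨F, ⟨hFfin, hFsub⟩, rfl⟩ := hv
  -- key claim by induction on the finite set F
  have key : ∀ F : Set (Set ↥D), F.Finite → F ⊆ S → x ∈ ⋂₀ F →
      ∃ n, ∀ m, n ≤ m → ∀ y : ↥D, (y : Submodule R M) = f m → y ∈ ⋂₀ F := by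
    intro F hFfin
    refine Set.Finite.induction_on F hFfin ?_ ?_
    · intro _ _
      exact ⟨0, fun m _ y _ => by simp⟩
    · intro U F' hUF' hF'fin ih hsub hxmem
      have hxU : x ∈ U := hxmem U (Set.mem_insert U F')
      have hxF' : x ∈ ⋂₀ F' := fun t ht => hxmem t (Set.mem_insert_of_mem U ht)
      obtain ⟨n, hn⟩ := ih (fun t ht => hsub (Set.mem_insert_of_mem U ht)) hxF'
      obtain ⟨N, rfl⟩ := hsub (Set.mem_insert U F')
      have hNL : ¬ N ≤ L := hxU
      have : ∃ m₁, ¬ N ≤ f m₁ := by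
        by_contra h
        push_neg at h
        exact hNL (le_iInf h)
      obtain ⟨m₁, hm₁⟩ := this
      refine ⟨max n m₁, fun m hm y hy => ?_⟩
      intro t ht
      rcases Set.mem_insert_iff.mp ht with h | h
      · subst h
        intro hcon
        exact hm₁ (le_trans (hy ▸ hcon) (hf (le_trans (le_max_right n m₁) hm)))
      · exact hn m (le_trans (le_max_left n m₁) hm) y hy t h
  obtain ⟨n, hn⟩ := key F hFfin hFsub hxv
  refine ⟨max n n₀, fun m hm => ?_⟩
  have hproper : ∀ k, max n n₀ ≤ k → f k ≠ ⊤ := by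
    intro k hk hcon
    exact hn₀ (top_le_iff.mp (hcon ▸ hf (le_trans (le_max_right n n₀) hk)))
  have heq : ∀ k, max n n₀ ≤ k → f k = L := by
    intro k hk
    have hy : (⟨f k, hproper k hk⟩ : ↥D) ∈ ⋂₀ F :=
      hn k (le_trans (le_max_left n n₀) hk) _ rfl
    have := hvx hy
    simpa [x, Subtype.ext_iff] using this
  rw [heq m hm, heq (max n n₀) le_rfl]
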